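/- arXiv:2008.07492 — 2 statements merged into one kernel-verified Lean document; each statement's English description precedes it below -/
import Mathlib

section
/- Let Ā be a real m×m matrix, ρ > 0 and τ_d > 0 scalars, P₀h and P₁d real symmetric m×m matrices, G₁ a real symmetric m×m matrix, and J́ a real m×m matrix. Suppose P₁d is positive definite and the 2m×2m block matrix [[e^{−2ρτ_d}·P₀h + G₁, J́ᵀ·exp(Āᵀτ_d)·P₁d], [(J́ᵀ·exp(Āᵀτ_d)·P₁d)ᵀ, P₁d]] is positive definite. Then for every ξ ∈ ℝ^m with ξᵀ·G₁·ξ ≤ 0, one has (J́·ξ)ᵀ · (e^{2ρτ_d}·exp(Āᵀτ_d)·P₁d·exp(Āτ_d)) · (J́·ξ) ≤ ξᵀ·P₀h·ξ. -/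
open Matrix NormedSpace

/-- Schur complement / S-procedure step for the first LMI of Corollary 4.1:
positive definiteness of the block matrix
`[[e^{−2ρτ_d}·P₀h + G₁, J́ᵀ·exp(Āᵀτ_d)·P₁d], [(J́ᵀ·exp(Āᵀτ_d)·P₁d)ᵀ, P₁d]]`
implies that for every `ξ` with `ξᵀG₁ξ ≤ 0`,
`(J́ξ)ᵀ · (e^{2ρτ_d}·exp(Āᵀτ_d)·P₁d·exp(Āτ_d)) · (J́ξ) ≤ ξᵀ·P₀h·ξ`. -/
theorem stmt5 (m : ℕ) (Abar : Matrix (Fin m) (Fin m) ℝ) (ρ τd : ℝ) (hρ : 0 < ρ) (hτd : 0 < τd)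
    (P0h P1d G₁ : Matrix (Fin m) (Fin m) ℝ) (Jacute : Matrix (Fin m) (Fin m) ℝ)
    (hP0h : P0h.IsSymm) (hP1d : P1d.IsSymm) (hG₁ : G₁.IsSymm)
    (hP1dpos : P1d.PosDef)
    (hLMI : (Matrix.fromBlocks
        (Real.exp (-(2 * ρ * τd)) • P0h + G₁)
        (Jacuteᵀ * NormedSpace.exp (τd • Abarᵀ) * P1d)
        (Jacuteᵀ * NormedSpace.exp (τd • Abarᵀ) * P1d)ᵀ
        P1d).PosDef) :
    ∀ ξ : Fin m → ℝ, ξ ⬝ᵥ G₁ *ᵥ ξ ≤ 0 →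
      (Jacute *ᵥ ξ) ⬝ᵥ
          (Real.exp (2 * ρ * τd) • (NormedSpace.exp (τd • Abarᵀ) * P1d * NormedSpace.exp (τd • Abar))) *ᵥ
          (Jacute *ᵥ ξ) ≤
        ξ ⬝ᵥ P0h *ᵥ ξ := by
  intro ξ hξ
  set E := NormedSpace.exp (τd • Abar) with hE
  have hEt : NormedSpace.exp (τd • Abarᵀ) = Eᵀ := by
    rw [hE, ← Matrix.exp_transpose, Matrix.transpose_smul]
  have hInv : Invertible P1d := hP1dpos.isUnit.invertible
  set A := Real.exp (-(2 * ρ * τd)) • P0h + G₁ with hA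
  set B := Jacuteᵀ * NormedSpace.exp (τd • Abarᵀ) * P1d with hB
  have hBH : Bᵀ = Bᴴ := (Matrix.conjTranspose_eq_transpose_of_trivial B).symm
  rw [hBH] at hLMI
  have hS : (A - B * P1d⁻¹ * Bᴴ).PosSemidef :=
    ((Matrix.PosDef.fromBlocks₂₂ A B hP1dpos).mp hLMI.posSemidef)
  have hBB : B * P1d⁻¹ * Bᴴ = Jacuteᵀ * (Eᵀ * P1d * E) * Jacute := by
    rw [← hBH, hB, hEt, Matrix.transpose_mul, Matrix.transpose_mul, Matrix.transpose_transpose,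
      Matrix.transpose_transpose, hP1d.eq]
    simp only [Matrix.mul_assoc, Matrix.inv_mul_cancel_left_of_invertible]
  rw [hBB] at hS
  have hquad := hS.dotProduct_mulVec_nonneg ξ
  have hconv : ξ ⬝ᵥ (Jacuteᵀ * (Eᵀ * P1d * E) * Jacute) *ᵥ ξ
      = (Jacute *ᵥ ξ) ⬝ᵥ (Eᵀ * P1d * E) *ᵥ (Jacute *ᵥ ξ) := by
    rw [← Matrix.mulVec_mulVec, ← Matrix.mulVec_mulVec, dotProduct_mulVec,
      Matrix.vecMul_transpose]
  simp only [Matrix.sub_mulVec, dotProduct_sub, hA, Matrix.add_mulVec,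
    dotProduct_add, Matrix.smul_mulVec, dotProduct_smul,
    star_trivial, smul_eq_mul] at hquad
  rw [hconv] at hquad
  rw [hEt, Matrix.smul_mulVec, dotProduct_smul, smul_eq_mul]
  have h1 : Real.exp (2 * ρ * τd) * Real.exp (-(2 * ρ * τd)) = 1 := by
    rw [← Real.exp_add]; simp
  have h2 : Jacute *ᵥ ξ ⬝ᵥ (Eᵀ * P1d * E) *ᵥ Jacute *ᵥ ξ
      ≤ Real.exp (-(2 * ρ * τd)) * (ξ ⬝ᵥ P0h *ᵥ ξ) := by linarith
  calc Real.exp (2 * ρ * τd) * (Jacute *ᵥ ξ ⬝ᵥ (Eᵀ * P1d * E) *ᵥ Jacute *ᵥ ξ)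
      ≤ Real.exp (2 * ρ * τd) * (Real.exp (-(2 * ρ * τd)) * (ξ ⬝ᵥ P0h *ᵥ ξ)) :=
        mul_le_mul_of_nonneg_left h2 (Real.exp_pos _).le
    _ = ξ ⬝ᵥ P0h *ᵥ ξ := by rw [← mul_assoc, h1, one_mul]
end

section
/- Let Ā be a real m×m matrix, ρ > 0, and h > τ_d > 0 scalars, P₀h and P₁d real symmetric m×m matrices, G₂ a real symmetric m×m matrix, and J̃ a real m×m matrix. Suppose P₀h is positive definite and the 2m×2m block matrix [[e^{−2ρ(h−τ_d)}·P₁d + G₂, J̃ᵀ·exp(Āᵀ(h−τ_d))·P₀h], [(J̃ᵀ·exp(Āᵀ(h−τ_d))·P₀h)ᵀ, P₀h]] is positive definite. Then for every ξ ∈ ℝ^m with ξᵀ·G₂·ξ ≤ 0, one has (J̃·ξ)ᵀ · (e^{2ρ(h−τ_d)}·exp(Āᵀ(h−τ_d))·P₀h·exp(Ā(h−τ_d))) · (J̃·ξ) ≤ ξᵀ·P₁d·ξ. -/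
open Matrix NormedSpace

/-- Schur complement / S-procedure step for the second LMI of Corollary 4.1:
positive definiteness of the block matrix
`[[e^{−2ρ(h−τ_d)}·P₁d + G₂, J̃ᵀ·exp(Āᵀ(h−τ_d))·P₀h], [(J̃ᵀ·exp(Āᵀ(h−τ_d))·P₀h)ᵀ, P₀h]]`
implies that for every `ξ` with `ξᵀG₂ξ ≤ 0`,
`(J̃ξ)ᵀ · (e^{2ρ(h−τ_d)}·exp(Āᵀ(h−τ_d))·P₀h·exp(Ā(h−τ_d))) · (J̃ξ) ≤ ξᵀ·P₁d·ξ`. -/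
theorem stmt6 (m : ℕ) (Abar : Matrix (Fin m) (Fin m) ℝ) (ρ h τd : ℝ)
    (hρ : 0 < ρ) (hτd : 0 < τd) (hh : τd < h)
    (P0h P1d G₂ : Matrix (Fin m) (Fin m) ℝ) (Jtilde : Matrix (Fin m) (Fin m) ℝ)
    (hP0h : P0h.IsSymm) (hP1d : P1d.IsSymm) (hG₂ : G₂.IsSymm)
    (hP0hpos : P0h.PosDef)
    (hLMI : (Matrix.fromBlocks
        (Real.exp (-(2 * ρ * (h - τd))) • P1d + G₂)
        (Jtildeᵀ * exp ((h - τd) • Abarᵀ) * P0h)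
        (Jtildeᵀ * exp ((h - τd) • Abarᵀ) * P0h)ᵀ
        P0h).PosDef) :
    ∀ ξ : Fin m → ℝ, ξ ⬝ᵥ G₂ *ᵥ ξ ≤ 0 →
      (Jtilde *ᵥ ξ) ⬝ᵥ
          (Real.exp (2 * ρ * (h - τd)) •
            (exp ((h - τd) • Abarᵀ) * P0h * exp ((h - τd) • Abar))) *ᵥ
          (Jtilde *ᵥ ξ) ≤
        ξ ⬝ᵥ P1d *ᵥ ξ := by

  intro ξ hξ
  have hET : exp ((h - τd) • Abarᵀ) = (exp ((h - τd) • Abar))ᵀ := by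
    rw [← Matrix.transpose_smul, Matrix.exp_transpose]
  set E := exp ((h - τd) • Abar) with hE
  set w : Fin m → ℝ := E *ᵥ (Jtilde *ᵥ ξ) with hw
  -- key scalar inequality
  have key : w ⬝ᵥ P0h *ᵥ w ≤ Real.exp (-(2 * ρ * (h - τd))) * (ξ ⬝ᵥ P1d *ᵥ ξ) := by
    rcases eq_or_ne ξ 0 with rfl | hne
    · simp [hw]
    · set v : Fin m ⊕ Fin m → ℝ := Sum.elim ξ (-w) with hv
      have hv0 : v ≠ 0 := by
        intro h0
        apply hne
        funext i
        have := congrFun h0 (Sum.inl i)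
        simpa [hv] using this
      have hpos := (Matrix.posDef_iff_dotProduct_mulVec.mp hLMI).2 hv0
      have hBT : (Jtildeᵀ * exp ((h - τd) • Abarᵀ) * P0h)ᵀ = P0h * E * Jtilde := by
        rw [hET]
        simp [Matrix.transpose_mul, hP0h.eq, Matrix.mul_assoc]
      have hq : star v ⬝ᵥ (Matrix.fromBlocks
          (Real.exp (-(2 * ρ * (h - τd))) • P1d + G₂)
          (Jtildeᵀ * exp ((h - τd) • Abarᵀ) * P0h)
          (Jtildeᵀ * exp ((h - τd) • Abarᵀ) * P0h)ᵀ
          P0h) *ᵥ v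
          = ξ ⬝ᵥ (Real.exp (-(2 * ρ * (h - τd))) • P1d + G₂) *ᵥ ξ
            - w ⬝ᵥ P0h *ᵥ w := by
        have h1 : ξ ⬝ᵥ (Jtildeᵀ * exp ((h - τd) • Abarᵀ) * P0h) *ᵥ (-w)
            = -(w ⬝ᵥ P0h *ᵥ w) := by
          rw [Matrix.dotProduct_mulVec, ← Matrix.mulVec_transpose, hBT]
          rw [Matrix.mulVec_mulVec, Matrix.mulVec_mulVec]
          have : (P0h * E * Jtilde) *ᵥ ξ = P0h *ᵥ w := by
            rw [hw, Matrix.mulVec_mulVec, Matrix.mulVec_mulVec, Matrix.mul_assoc]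
          rw [← Matrix.mulVec_mulVec, ← Matrix.mulVec_mulVec] at this ⊢
          rw [this, dotProduct_neg, dotProduct_comm]
        have h2 : (-w) ⬝ᵥ (Jtildeᵀ * exp ((h - τd) • Abarᵀ) * P0h)ᵀ *ᵥ ξ
            = -(w ⬝ᵥ P0h *ᵥ w) := by
          rw [hBT]
          have : (P0h * E * Jtilde) *ᵥ ξ = P0h *ᵥ w := by
            rw [hw, Matrix.mulVec_mulVec, Matrix.mulVec_mulVec, Matrix.mul_assoc]
          rw [this, neg_dotProduct]
        simp only [hv, Matrix.fromBlocks_mulVec, star_trivial,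
          sumElim_dotProduct_sumElim, dotProduct_add,
          Sum.elim_comp_inl, Sum.elim_comp_inr]
        rw [h1, h2]
        simp only [Matrix.mulVec_neg, dotProduct_neg, neg_dotProduct,
          neg_neg]
        ring
      rw [hq] at hpos
      have : w ⬝ᵥ P0h *ᵥ w < ξ ⬝ᵥ (Real.exp (-(2 * ρ * (h - τd))) • P1d + G₂) *ᵥ ξ :=
        by linarith
      have hsplit : ξ ⬝ᵥ (Real.exp (-(2 * ρ * (h - τd))) • P1d + G₂) *ᵥ ξ
          = Real.exp (-(2 * ρ * (h - τd))) * (ξ ⬝ᵥ P1d *ᵥ ξ) + ξ ⬝ᵥ G₂ *ᵥ ξ := by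
        simp [Matrix.add_mulVec, dotProduct_add, Matrix.smul_mulVec,
          dotProduct_smul, smul_eq_mul]
      rw [hsplit] at this
      linarith
  have hlhs : (Jtilde *ᵥ ξ) ⬝ᵥ
      (Real.exp (2 * ρ * (h - τd)) •
        (exp ((h - τd) • Abarᵀ) * P0h * exp ((h - τd) • Abar))) *ᵥ
      (Jtilde *ᵥ ξ)
      = Real.exp (2 * ρ * (h - τd)) * (w ⬝ᵥ P0h *ᵥ w) := by
    rw [hET, ← hE, Matrix.smul_mulVec, dotProduct_smul, smul_eq_mul]
    congr 1
    rw [Matrix.mul_assoc, ← Matrix.mulVec_mulVec, Matrix.dotProduct_mulVec,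
      Matrix.vecMul_transpose, ← Matrix.mulVec_mulVec]
  rw [hlhs]
  have hexp : Real.exp (2 * ρ * (h - τd)) * Real.exp (-(2 * ρ * (h - τd))) = 1 := by
    rw [← Real.exp_add]; simp
  calc Real.exp (2 * ρ * (h - τd)) * (w ⬝ᵥ P0h *ᵥ w)
      ≤ Real.exp (2 * ρ * (h - τd)) *
        (Real.exp (-(2 * ρ * (h - τd))) * (ξ ⬝ᵥ P1d *ᵥ ξ)) := by
        exact mul_le_mul_of_nonneg_left key (Real.exp_nonneg _)
    _ = ξ ⬝ᵥ P1d *ᵥ ξ := by rw [← mul_assoc, hexp, one_mul]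
end
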